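/- For the hyperexponential prior with rates μ₁ > μ₂ > … > μ_n > 0 and λ₁ − λ₀ > μ_n, the deterministic path components satisfy: on {π ∈ D : π_n ≠ 0}, lim_{t→∞} x_n(t,π) = (λ₁ − λ₀ − μ_n)/(λ₁ − λ₀) and lim_{t→∞} x_Δ(t,π) = μ_n/(λ₁ − λ₀), while lim_{t→∞} x_i(t,π) = 0 for i < n. -/

import Mathlib

open Filter


lemma exp_lim_zero {c : ℝ} (hc : c < 0) :
    Tendsto (fun t : ℝ => Real.exp (c * t)) atTop (nhds 0) := by
  apply Real.tendsto_exp_atBot.comp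
  exact Tendsto.const_mul_atTop_of_neg hc tendsto_id

lemma mul_exp_lim_zero {c : ℝ} (hc : c < 0) :
    Tendsto (fun t : ℝ => t * Real.exp (c * t)) atTop (nhds 0) := by
  have h1 : Tendsto (fun s : ℝ => s * Real.exp (-s)) atTop (nhds 0) := by
    simpa using Real.tendsto_pow_mul_exp_neg_atTop_nhds_zero 1
  have h2 : Tendsto (fun t : ℝ => (-c) * t) atTop atTop :=
    Tendsto.const_mul_atTop (by linarith) tendsto_id
  have h3 := (h1.comp h2).const_mul (-c)⁻¹
  rw [mul_zero] at h3
  refine h3.congr fun t => ?_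
  have hc' : c ≠ 0 := ne_of_lt hc
  field_simp
  simp only [Function.comp_apply]
  ring_nf

lemma integral_exp_mul' (c t : ℝ) (hc : c ≠ 0) :
    ∫ u in (0:ℝ)..t, Real.exp (c * u) = (Real.exp (c * t) - 1) / c := by
  have hd : ∀ u ∈ Set.uIcc (0:ℝ) t, HasDerivAt (fun u => Real.exp (c * u) / c)
      (Real.exp (c * u)) u := by
    intro u _
    have h := ((Real.hasDerivAt_exp (c * u)).comp u ((hasDerivAt_id u).const_mul c)).div_const c
    exact h.congr_deriv (by field_simp)
  have hi : IntervalIntegrable (fun u => Real.exp (c * u)) MeasureTheory.volume 0 t :=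
    (Real.continuous_exp.comp (continuous_const.mul continuous_id)).intervalIntegrable _ _
  rw [intervalIntegral.integral_eq_sub_of_hasDerivAt hd hi]
  simp [sub_div]

lemma I_eq (r c t : ℝ) :
    ∫ u in (0:ℝ)..t, Real.exp (r * u) * (c * Real.exp (-c * u))
      = c * ∫ u in (0:ℝ)..t, Real.exp ((r - c) * u) := by
  rw [← intervalIntegral.integral_const_mul]
  apply intervalIntegral.integral_congr
  intro u _
  show Real.exp (r * u) * (c * Real.exp (-c * u)) = c * Real.exp ((r - c) * u)
  rw [mul_left_comm, ← Real.exp_add, show r * u + -c * u = (r - c) * u by ring]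

lemma g_last (r m : ℝ) (hm : 0 < m) (hmr : m < r) :
    Tendsto (fun t => Real.exp ((m - r) * t) *
      ∫ u in (0:ℝ)..t, Real.exp (r * u) * (m * Real.exp (-m * u))) atTop
      (nhds (m / (r - m))) := by
  have hrm : r - m ≠ 0 := by linarith [hmr]
  have key : Tendsto (fun t : ℝ => m / (r - m) * (1 - Real.exp ((m - r) * t))) atTop
      (nhds (m / (r - m))) := by
    have := ((tendsto_const_nhds (α := ℝ) (x := (1:ℝ))).sub
      (exp_lim_zero (show m - r < 0 by linarith))).const_mul (m / (r - m))
    simpa using this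
  refine key.congr fun t => ?_
  rw [I_eq, integral_exp_mul' _ _ hrm]
  have e1 : Real.exp ((m - r) * t) * Real.exp ((r - m) * t) = 1 := by
    rw [← Real.exp_add, show (m - r) * t + (r - m) * t = 0 by ring, Real.exp_zero]
  field_simp
  nlinarith [e1]

lemma g_small (r m c : ℝ) (hmr : m < r) (hmc : m < c) :
    Tendsto (fun t => Real.exp ((m - r) * t) *
      ∫ u in (0:ℝ)..t, Real.exp (r * u) * (c * Real.exp (-c * u))) atTop
      (nhds 0) := by
  by_cases hrc : r = c
  · have key : Tendsto (fun t : ℝ => c * (t * Real.exp ((m - c) * t))) atTop (nhds 0) := by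
      simpa using (mul_exp_lim_zero (show m - c < 0 by linarith)).const_mul c
    refine key.congr fun t => ?_
    rw [I_eq, hrc, sub_self]
    simp
    ring
  · have hrc' : r - c ≠ 0 := sub_ne_zero.2 hrc
    have key : Tendsto (fun t : ℝ => c / (r - c) *
        (Real.exp ((m - c) * t) - Real.exp ((m - r) * t))) atTop (nhds 0) := by
      have := ((exp_lim_zero (show m - c < 0 by linarith)).sub
        (exp_lim_zero (show m - r < 0 by linarith))).const_mul (c / (r - c))
      simpa using this
    refine key.congr fun t => ?_
    rw [I_eq, integral_exp_mul' _ _ hrc']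
    have e1 : Real.exp ((m - r) * t) * Real.exp ((r - c) * t) = Real.exp ((m - c) * t) := by
      rw [← Real.exp_add]; congr 1; ring
    field_simp
    rw [mul_comm t (m - r)]
    linear_combination (-c) * e1

set_option maxHeartbeats 1000000 in
/-- Hyperexponential prior with `λ₁ − λ₀ > μ_n`: on `{π_n ≠ 0}`,
`x_n(t,π) → (λ₁−λ₀−μ_n)/(λ₁−λ₀)`, `x_Δ(t,π) → μ_n/(λ₁−λ₀)`, and
`x_i(t,π) → 0` for `i < n`, as `t → ∞`. -/
theorem hyperexponential_limits_supercritical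
    {n : ℕ} (μ : Fin (n + 1) → ℝ) (hμanti : StrictAnti μ)
    (hμpos : 0 < μ (Fin.last n))
    (l0 l1 : ℝ) (h0 : 0 < l0) (h1 : 0 < l1)
    (hrate : μ (Fin.last n) < l1 - l0)
    (π : Fin (n + 1) → ℝ) (πΔ : ℝ)
    (hπ0 : ∀ i, 0 ≤ π i) (hπΔ0 : 0 ≤ πΔ)
    (hsum : (∑ i, π i) + πΔ = 1)
    (hπn : 0 < π (Fin.last n)) (hπΔ1 : πΔ ≠ 1)
    (N : ℝ → ℝ)
    (hN : ∀ t, N t = (∑ k, π k * Real.exp (-μ k * t)) +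
      Real.exp (-(l1 - l0) * t) *
        (πΔ + ∑ k, π k * ∫ u in (0:ℝ)..t,
          Real.exp ((l1 - l0) * u) * (μ k * Real.exp (-μ k * u))))
    (x : Fin (n + 1) → ℝ → ℝ)
    (hx : ∀ i t, x i t = π i * Real.exp (-μ i * t) / N t)
    (xΔ : ℝ → ℝ)
    (hxΔ : ∀ t, xΔ t = Real.exp (-(l1 - l0) * t) *
      (πΔ + ∑ k, π k * ∫ u in (0:ℝ)..t,
        Real.exp ((l1 - l0) * u) * (μ k * Real.exp (-μ k * u))) / N t) :
    Tendsto (x (Fin.last n)) atTop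
        (nhds ((l1 - l0 - μ (Fin.last n)) / (l1 - l0))) ∧
      Tendsto xΔ atTop (nhds (μ (Fin.last n) / (l1 - l0))) ∧
      ∀ i : Fin (n + 1), i < Fin.last n → Tendsto (x i) atTop (nhds 0) := by
  set r : ℝ := l1 - l0 with hrdef
  set m : ℝ := μ (Fin.last n) with hmdef
  have hm0 : 0 < m := hμpos
  have hmr : m < r := hrate
  have hr0 : 0 < r := lt_trans hm0 hmr
  clear_value r m
  have hrm : r - m ≠ 0 := sub_ne_zero.2 hmr.ne'
  have hπ' : π (Fin.last n) ≠ 0 := ne_of_gt hπn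
  have hr' : r ≠ 0 := ne_of_gt hr0
  -- abbreviations
  set g : Fin (n + 1) → ℝ → ℝ := fun k t => Real.exp ((m - r) * t) *
    ∫ u in (0:ℝ)..t, Real.exp (r * u) * (μ k * Real.exp (-μ k * u)) with hgdef
  set F : ℝ → ℝ := fun t => Real.exp (m * t) * N t with hFdef
  have hμle : ∀ k : Fin (n + 1), k ≠ Fin.last n → m < μ k := by
    intro k hk
    rw [hmdef]
    exact hμanti (lt_of_le_of_ne (Fin.le_last k) hk)
  -- limits of g
  have hgk : ∀ k : Fin (n + 1), Tendsto (g k) atTop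
      (nhds (if k = Fin.last n then m / (r - m) else 0)) := by
    intro k
    by_cases hk : k = Fin.last n
    · simp only [hk, if_pos rfl, hgdef, ← hmdef]
      exact g_last r m hm0 hmr
    · simp only [if_neg hk, hgdef]
      exact g_small r m (μ k) hmr (hμle k hk)
  -- limits of the exponential terms
  have he : ∀ k : Fin (n + 1), Tendsto (fun t => π k * Real.exp ((m - μ k) * t)) atTop
      (nhds (if k = Fin.last n then π (Fin.last n) else 0)) := by
    intro k
    by_cases hk : k = Fin.last n
    · simp only [hk, if_pos rfl, ← hmdef, sub_self, zero_mul, Real.exp_zero, mul_one]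
      exact tendsto_const_nhds
    · simp only [if_neg hk]
      have := (exp_lim_zero (show m - μ k < 0 by linarith [hμle k hk])).const_mul (π k)
      simpa using this
  -- the three pieces of F
  have hFsum1 : Tendsto (fun t => ∑ k, π k * Real.exp ((m - μ k) * t)) atTop
      (nhds (π (Fin.last n))) := by
    have := tendsto_finset_sum Finset.univ (fun k _ => he k)
    simpa using this
  have hFΔ : Tendsto (fun t => πΔ * Real.exp ((m - r) * t)) atTop (nhds 0) := by
    simpa using (exp_lim_zero (show m - r < 0 by linarith)).const_mul πΔ
  have hFsum2 : Tendsto (fun t => ∑ k, π k * g k t) atTop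
      (nhds (π (Fin.last n) * (m / (r - m)))) := by
    have h := tendsto_finset_sum Finset.univ (fun k (_ : k ∈ Finset.univ) => (hgk k).const_mul (π k))
    have hs : (∑ k, π k * (if k = Fin.last n then m / (r - m) else 0))
        = π (Fin.last n) * (m / (r - m)) := by
      simp [Finset.sum_ite_eq', mul_ite]
    rwa [hs] at h
  -- pointwise identity for F
  have hexp : ∀ a t : ℝ, Real.exp (m * t) * Real.exp (-a * t) = Real.exp ((m - a) * t) := by
    intro a t
    rw [← Real.exp_add]; congr 1; ring
  have hB : ∀ t, Real.exp (m * t) * (Real.exp (-r * t) *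
      (πΔ + ∑ k, π k * ∫ u in (0:ℝ)..t, Real.exp (r * u) * (μ k * Real.exp (-μ k * u))))
      = πΔ * Real.exp ((m - r) * t) + ∑ k, π k * g k t := by
    intro t
    rw [← mul_assoc, hexp r t, mul_add, Finset.mul_sum]
    congr 1
    · ring
    · refine Finset.sum_congr rfl fun k _ => ?_
      simp only [hgdef]
      ring
  have hFeq : ∀ t, F t = (∑ k, π k * Real.exp ((m - μ k) * t)) +
      (πΔ * Real.exp ((m - r) * t) + ∑ k, π k * g k t) := by
    intro t
    simp only [hFdef]
    rw [hN t, mul_add, Finset.mul_sum]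
    congr 1
    · refine Finset.sum_congr rfl fun k _ => ?_
      rw [show Real.exp (m * t) * (π k * Real.exp (-μ k * t))
        = π k * (Real.exp (m * t) * Real.exp (-μ k * t)) by ring, hexp]
    · exact hB t
  set D : ℝ := π (Fin.last n) + (0 + π (Fin.last n) * (m / (r - m))) with hDdef
  have hF : Tendsto F atTop (nhds D) := by
    refine (hFsum1.add (hFΔ.add hFsum2)).congr fun t => (hFeq t).symm
  have hD0 : D ≠ 0 := by
    have : 0 < m / (r - m) := by
      apply div_pos hm0; linarith
    have : 0 < D := by
      rw [hDdef]; positivity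
    linarith
  -- pointwise identities for x and xΔ
  have hxeq : ∀ (i : Fin (n + 1)) t, x i t = π i * Real.exp ((m - μ i) * t) / F t := by
    intro i t
    rw [hx i t, hFdef]
    rw [show π i * Real.exp ((m - μ i) * t) = Real.exp (m * t) * (π i * Real.exp (-μ i * t)) by
      rw [← hexp (μ i) t]; ring]
    rw [mul_div_mul_left _ _ (Real.exp_ne_zero _)]
  have hxΔeq : ∀ t, xΔ t = (πΔ * Real.exp ((m - r) * t) + ∑ k, π k * g k t) / F t := by
    intro t
    rw [hxΔ t, hFdef, ← hB t, mul_div_mul_left _ _ (Real.exp_ne_zero _)]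
  refine ⟨?_, ?_, ?_⟩
  · have h := ((he (Fin.last n)).div hF hD0)
    simp only [if_pos rfl] at h
    have h2 : Tendsto (x (Fin.last n)) atTop (nhds (π (Fin.last n) / D)) :=
      h.congr fun t => (hxeq (Fin.last n) t).symm
    have : π (Fin.last n) / D = (r - m) / r := by
      rw [div_eq_div_iff hD0 hr', hDdef]
      field_simp
      ring
    rwa [this] at h2
  · have h := (hFΔ.add hFsum2).div hF hD0
    have h2 : Tendsto xΔ atTop (nhds ((0 + π (Fin.last n) * (m / (r - m))) / D)) :=
      h.congr fun t => (hxΔeq t).symm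
    have : (0 + π (Fin.last n) * (m / (r - m))) / D = m / r := by
      rw [div_eq_div_iff hD0 hr', hDdef]
      field_simp
      ring
    rwa [this] at h2
  · intro i hi
    have h := ((he i).div hF hD0)
    simp only [if_neg (Fin.ne_last_of_lt hi)] at h
    rw [zero_div] at h
    exact h.congr fun t => (hxeq i t).symm
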